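/- Suppose p ∈ Σ is not a vertex and q, q' ∈ Σ satisfy q' = M_p q, q = M_p q', and q + q' = 2q_[p] with q ≠ q'. Then p lies on the boundary ∂Σ (one coordinate zero, not a vertex), and q - q_[p] = β·e₋₁(p) for some real β ≠ 0, where e₋₁(p) is the eigenvector of M_p with eigenvalue -1. -/
import Mathlib


open Matrix

noncomputable def Mp (p : Fin 3 → ℝ) : Matrix (Fin 3) (Fin 3) ℝ :=
  !![0, p 2 / (p 0 + p 2), p 1 / (p 0 + p 1);
     p 2 / (p 1 + p 2), 0, p 0 / (p 0 + p 1);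
     p 1 / (p 1 + p 2), p 0 / (p 0 + p 2), 0]

def inSimplex (v : Fin 3 → ℝ) : Prop := (∀ i, 0 ≤ v i) ∧ v 0 + v 1 + v 2 = 1

/-- The eigenvector `e₋₁(p)` of `M_p` with eigenvalue `-1`, for boundary points `p`
(the formula depends on which coordinate of `p` vanishes). -/
noncomputable def eNeg (p : Fin 3 → ℝ) : Fin 3 → ℝ :=
  if p 2 = 0 then ![p 1 / 2, p 0 / 2, -(1 / 2)]
  else if p 1 = 0 then ![p 2 / 2, -(1 / 2), p 0 / 2]
  else ![-(1 / 2), p 2 / 2, p 1 / 2]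

lemma keyE (a b c q0 q1 q2 : ℝ) (hab : a + b ≠ 0) (hac : a + c ≠ 0) (hbc : b + c ≠ 0)
    (hps : a + b + c = 1) (hqs : q0 + q1 + q2 = 1)
    (e0 : c/(a+c)*q1 + b/(a+b)*q2 = 1 - a - q0)
    (e1 : c/(b+c)*q0 + a/(a+b)*q2 = 1 - b - q1)
    (e2 : b/(b+c)*q0 + a/(a+c)*q1 = 1 - c - q2) :
    a * ((a+b)*(q1 - (1-b)/2) + (a+c)*(q2 - (1-c)/2)) = 0 ∧
    b * ((a+b)*(q0 - (1-a)/2) + (b+c)*(q2 - (1-c)/2)) = 0 ∧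
    c * ((a+c)*(q0 - (1-a)/2) + (b+c)*(q1 - (1-b)/2)) = 0 := by
  have hc : c = 1 - a - b := by linarith
  subst hc
  have hq2 : q2 = 1 - q0 - q1 := by linarith
  subst hq2
  have h1a : (1:ℝ) - a ≠ 0 := fun h => hbc (by linarith)
  have h1b : (1:ℝ) - b ≠ 0 := fun h => hac (by linarith)
  field_simp [h1a, h1b] at e0 e1 e2
  refine ⟨by linear_combination -e0, by linear_combination -e1, by linear_combination -e2⟩

lemma mainHelper (a b c q0 q1 q2 : ℝ)
    (hab : 0 < a + b) (hac : 0 < a + c) (hbc : 0 < b + c)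
    (hps : a + b + c = 1) (hqs : q0 + q1 + q2 = 1)
    (e0 : c/(a+c)*q1 + b/(a+b)*q2 = 1 - a - q0)
    (e1 : c/(b+c)*q0 + a/(a+b)*q2 = 1 - b - q1)
    (e2 : b/(b+c)*q0 + a/(a+c)*q1 = 1 - c - q2)
    (hne : ¬(q0 - (1-a)/2 = 0 ∧ q1 - (1-b)/2 = 0 ∧ q2 - (1-c)/2 = 0)) :
    (c = 0 ∧ ∃ β : ℝ, β ≠ 0 ∧ q0 - (1-a)/2 = β*(b/2) ∧ q1 - (1-b)/2 = β*(a/2) ∧ q2 - (1-c)/2 = β*(-(1/2))) ∨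
    (c ≠ 0 ∧ b = 0 ∧ ∃ β : ℝ, β ≠ 0 ∧ q0 - (1-a)/2 = β*(c/2) ∧ q1 - (1-b)/2 = β*(-(1/2)) ∧ q2 - (1-c)/2 = β*(a/2)) ∨
    (c ≠ 0 ∧ b ≠ 0 ∧ a = 0 ∧ ∃ β : ℝ, β ≠ 0 ∧ q0 - (1-a)/2 = β*(-(1/2)) ∧ q1 - (1-b)/2 = β*(c/2) ∧ q2 - (1-c)/2 = β*(b/2)) := by
  by_cases hc : c = 0
  · subst hc
    left
    have hb' : b = 1 - a := by linarith
    subst hb'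
    have hq2 : q2 = 1 - q0 - q1 := by linarith
    subst hq2
    refine ⟨rfl, 2*q0 + 2*q1 - 1, ?_, ?_, ?_, by ring⟩
    · intro h
      apply hne
      refine ⟨?_, ?_, by linarith⟩
      · linear_combination e0 + ((1-a)/2)*h
      · linear_combination e1 + (a/2)*h
    · linear_combination e0
    · linear_combination e1
  · by_cases hb : b = 0
    · subst hb
      right; left
      have hc' : c = 1 - a := by linarith
      subst hc'
      have hq2 : q2 = 1 - q0 - q1 := by linarith
      subst hq2
      refine ⟨hc, rfl, 1 - 2*q1, ?_, ?_, by ring, ?_⟩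
      · intro h
        apply hne
        refine ⟨?_, by linarith, ?_⟩
        · linear_combination e0 + ((1-a)/2)*h
        · linear_combination e2 + (a/2)*h
      · linear_combination e0
      · linear_combination e2
    · by_cases ha : a = 0
      · subst ha
        right; right
        have hc' : c = 1 - b := by linarith
        subst hc'
        have hq2 : q2 = 1 - q0 - q1 := by linarith
        subst hq2
        refine ⟨hc, hb, rfl, 1 - 2*q0, ?_, by ring, ?_, ?_⟩
        · intro h
          apply hne
          refine ⟨by linarith, ?_, ?_⟩
          · linear_combination e1 + ((1-b)/2)*h
          · linear_combination e2 + (b/2)*h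
        · linear_combination e1
        · linear_combination e2
      · exfalso
        obtain ⟨E0, E1, E2⟩ := keyE a b c q0 q1 q2 hab.ne' hac.ne' hbc.ne' hps hqs e0 e1 e2
        set u := q0 - (1-a)/2 with hu
        set v := q1 - (1-b)/2 with hv
        set w := q2 - (1-c)/2 with hw
        have F0 := (mul_eq_zero.mp E0).resolve_left ha
        have F1 := (mul_eq_zero.mp E1).resolve_left hb
        have F2 := (mul_eq_zero.mp E2).resolve_left hc
        have G : (b+c) * ((a+c)*w - (a+b)*v) = 0 := by linear_combination (a+c)*F1 - (a+b)*F2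
        have G' := (mul_eq_zero.mp G).resolve_left hbc.ne'
        have hw0 : w = 0 := by
          have h4 : (a+c) * w = 0 := by linarith
          exact (mul_eq_zero.mp h4).resolve_left hac.ne'
        have hv0 : v = 0 := by
          have h4 : (a+b) * v = 0 := by
            rw [hw0] at F0; linarith
          exact (mul_eq_zero.mp h4).resolve_left hab.ne'
        have hu0 : u = 0 := by
          have h4 : (a+b) * u = 0 := by
            rw [hw0] at F1; linarith
          exact (mul_eq_zero.mp h4).resolve_left hab.ne'
        exact hne ⟨hu0, hv0, hw0⟩

/-- If `p ∈ Σ` is not a vertex and `q, q' ∈ Σ` form a genuine two-cycle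
(`q' = M_p q`, `q = M_p q'`, `q + q' = 2 q_[p]`, `q ≠ q'`), then `p` lies on the
boundary of `Σ` and `q - q_[p] = β·e₋₁(p)` for some real `β ≠ 0`. -/
theorem stmt14 (p q q' : Fin 3 → ℝ)
    (hp : inSimplex p) (hpV : ∀ i, p i ≠ 1)
    (hq : inSimplex q) (hq' : inSimplex q')
    (h1 : (Mp p).mulVec q = q') (h2 : (Mp p).mulVec q' = q)
    (h3 : ∀ i, q i + q' i = 2 * ((1 - p i) / 2)) (hne : q ≠ q') :
    (∃ i, p i = 0) ∧
    ∃ β : ℝ, β ≠ 0 ∧ ∀ i, q i - (1 - p i) / 2 = β * eNeg p i := by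
  obtain ⟨hpn, hps⟩ := hp
  obtain ⟨hqn, hqs⟩ := hq
  have hp0 : p 0 < 1 := lt_of_le_of_ne (by linarith [hpn 1, hpn 2]) (hpV 0)
  have hp1 : p 1 < 1 := lt_of_le_of_ne (by linarith [hpn 0, hpn 2]) (hpV 1)
  have hp2 : p 2 < 1 := lt_of_le_of_ne (by linarith [hpn 0, hpn 1]) (hpV 2)
  have hab : 0 < p 0 + p 1 := by linarith
  have hac : 0 < p 0 + p 2 := by linarith
  have hbc : 0 < p 1 + p 2 := by linarith
  have e0 := congrFun h1 0
  have e1 := congrFun h1 1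
  have e2 := congrFun h1 2
  simp [Mp, Matrix.mulVec, dotProduct, Fin.sum_univ_three] at e0 e1 e2
  have e0' : p 2/(p 0 + p 2)*q 1 + p 1/(p 0 + p 1)*q 2 = 1 - p 0 - q 0 := by
    rw [e0]; linarith [h3 0]
  have e1' : p 2/(p 1 + p 2)*q 0 + p 0/(p 0 + p 1)*q 2 = 1 - p 1 - q 1 := by
    rw [e1]; linarith [h3 1]
  have e2' : p 1/(p 1 + p 2)*q 0 + p 0/(p 0 + p 2)*q 1 = 1 - p 2 - q 2 := by
    rw [e2]; linarith [h3 2]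
  have hne' : ¬(q 0 - (1 - p 0)/2 = 0 ∧ q 1 - (1 - p 1)/2 = 0 ∧ q 2 - (1 - p 2)/2 = 0) := by
    rintro ⟨g0, g1, g2⟩
    apply hne
    funext i
    fin_cases i
    · show q 0 = q' 0; linarith [h3 0]
    · show q 1 = q' 1; linarith [h3 1]
    · show q 2 = q' 2; linarith [h3 2]
  rcases mainHelper (p 0) (p 1) (p 2) (q 0) (q 1) (q 2) hab hac hbc hps hqs e0' e1' e2' hne' with
    ⟨hc, β, hβ, H0, H1, H2⟩ | ⟨hc, hb, β, hβ, H0, H1, H2⟩ | ⟨hc, hb, ha, β, hβ, H0, H1, H2⟩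
  · refine ⟨⟨2, hc⟩, β, hβ, fun i => ?_⟩
    fin_cases i
    · show q 0 - (1 - p 0)/2 = β * eNeg p 0
      simp [eNeg, hc]
      linear_combination H0
    · show q 1 - (1 - p 1)/2 = β * eNeg p 1
      simp [eNeg, hc]
      linear_combination H1
    · show q 2 - (1 - p 2)/2 = β * eNeg p 2
      simp [eNeg, hc]
      linear_combination H2 - (1/2)*hc
  · refine ⟨⟨1, hb⟩, β, hβ, fun i => ?_⟩
    fin_cases i
    · show q 0 - (1 - p 0)/2 = β * eNeg p 0
      simp [eNeg, hc, hb]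
      linear_combination H0
    · show q 1 - (1 - p 1)/2 = β * eNeg p 1
      simp [eNeg, hc, hb]
      linear_combination H1 - (1/2)*hb
    · show q 2 - (1 - p 2)/2 = β * eNeg p 2
      simp [eNeg, hc, hb]
      linear_combination H2
  · refine ⟨⟨0, ha⟩, β, hβ, fun i => ?_⟩
    fin_cases i
    · show q 0 - (1 - p 0)/2 = β * eNeg p 0
      simp [eNeg, hc, hb]
      linear_combination H0
    · show q 1 - (1 - p 1)/2 = β * eNeg p 1
      simp [eNeg, hc, hb]
      linear_combination H1
    · show q 2 - (1 - p 2)/2 = β * eNeg p 2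
      simp [eNeg, hc, hb]
      linear_combination H2
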